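/- Let l = m·s with |l| > m > 1, gcd(m,s) = 1, m dividing k₁ and k₂, and suppose x·k₁ = y·k₂ for some nonzero s-numbers x, y. Then there exist surjective group homomorphisms G(l,m;k₁) → G(l,m;k₂) and G(l,m;k₂) → G(l,m;k₁), where G(l,m;k) = ⟨a,t ∣ t⁻¹a⁻ᵏtaˡt⁻¹aᵏt = aᵐ⟩. -/

import Mathlib

/-- A nonzero integer `n` is an `s`-number if every prime dividing `n` divides `s`. -/
def IsSNumber (s n : ℤ) : Prop := ∀ p : ℤ, Prime p → p ∣ n → p ∣ s

/-- The relator `t⁻¹a⁻ᵏtaˡt⁻¹aᵏta⁻ᵐ` in the free group on `a` (= `of true`) and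
`t` (= `of false`). -/
def Grel (l m k : ℤ) : FreeGroup Bool :=
  (FreeGroup.of false)⁻¹ * (FreeGroup.of true) ^ (-k) * (FreeGroup.of false) *
    (FreeGroup.of true) ^ l * (FreeGroup.of false)⁻¹ * (FreeGroup.of true) ^ k *
    (FreeGroup.of false) * (FreeGroup.of true) ^ (-m)

/-- The one-relator group `G(l,m;k) = ⟨a, t ∣ t⁻¹a⁻ᵏtaˡt⁻¹aᵏt = aᵐ⟩`. -/
abbrev GG (l m k : ℤ) := PresentedGroup ({Grel l m k} : Set (FreeGroup Bool))


lemma sNumber_dvd_pow (s : ℤ) (n : ℤ) (hn : n ≠ 0) (h : IsSNumber s n) :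
    ∃ N : ℕ, n ∣ s ^ N := by
  suffices H : ∀ a : ℕ, ∀ n : ℤ, n.natAbs = a → n ≠ 0 → IsSNumber s n → ∃ N : ℕ, n ∣ s ^ N from
    H n.natAbs n rfl hn h
  intro a
  induction a using Nat.strong_induction_on with
  | _ a ih =>
    intro n hna hn h
    by_cases hu : n.natAbs = 1
    · exact ⟨0, by rw [pow_zero]; exact (Int.isUnit_iff_natAbs_eq.mpr hu).dvd⟩
    · obtain ⟨q, hq, hqn⟩ := Int.exists_prime_and_dvd hu
      obtain ⟨n', rfl⟩ := hqn
      have hn' : n' ≠ 0 := by rintro rfl; simp at hn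
      have hq0 : q ≠ 0 := hq.ne_zero
      have hlt : n'.natAbs < a := by
        subst hna
        rw [Int.natAbs_mul]
        have h2 : 2 ≤ q.natAbs := (Int.prime_iff_natAbs_prime.mp hq).two_le
        have := Int.natAbs_pos.mpr hn'
        calc n'.natAbs < 2 * n'.natAbs := by omega
          _ ≤ q.natAbs * n'.natAbs := Nat.mul_le_mul_right _ h2
      have hs' : IsSNumber s n' := fun p hp hpd => h p hp (hpd.mul_left q)
      obtain ⟨N, hN⟩ := ih _ hlt n' rfl hn' hs'
      exact ⟨N + 1, by
        rw [pow_succ']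
        exact mul_dvd_mul (h q hq (Dvd.intro n' rfl)) hN⟩

section

variable (l m k : ℤ)

/-- The generator `a` of `GG l m k`. -/
noncomputable def ga : GG l m k := PresentedGroup.of true
/-- The generator `t` of `GG l m k`. -/
noncomputable def gt' : GG l m k := PresentedGroup.of false
/-- The element `b = t⁻¹ aᵏ t`. -/
noncomputable def gb : GG l m k := (gt' l m k)⁻¹ * (ga l m k) ^ k * gt' l m k

lemma grel_eq_one :
    (gt' l m k)⁻¹ * (ga l m k) ^ (-k) * gt' l m k * (ga l m k) ^ l * (gt' l m k)⁻¹ *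
      (ga l m k) ^ k * gt' l m k * (ga l m k) ^ (-m) = 1 := by
  have h : (PresentedGroup.mk {Grel l m k}) (Grel l m k) = 1 := by
    apply (QuotientGroup.eq_one_iff _).mpr
    exact Subgroup.subset_normalClosure (Set.mem_singleton _)
  rw [← h]
  conv_rhs => arg 2; rw [Grel]
  simp only [map_mul, map_inv, map_zpow]
  rfl

lemma rel1 : (gb l m k)⁻¹ * (ga l m k) ^ l * gb l m k = (ga l m k) ^ m := by
  have h := grel_eq_one l m k
  set a := ga l m k
  set t := gt' l m k
  rw [show gb l m k = t⁻¹ * a ^ k * t from rfl]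
  have h2 : t⁻¹ * a ^ (-k) * t = (t⁻¹ * a ^ k * t)⁻¹ := by
    rw [zpow_neg]; group
  rw [h2] at h
  have h3 := mul_eq_one_iff_eq_inv.mp h
  rw [zpow_neg, inv_inv] at h3
  rw [← h3]; group

lemma key1 (j : ℤ) :
    (gb l m k)⁻¹ * (ga l m k) ^ (l * j) * gb l m k = (ga l m k) ^ (m * j) := by
  have h := rel1 l m k
  set a := ga l m k
  set b := gb l m k
  calc b⁻¹ * a ^ (l * j) * b = b⁻¹ * (a ^ l) ^ j * b⁻¹⁻¹ := by
        rw [zpow_mul, inv_inv]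
    _ = (b⁻¹ * a ^ l * b⁻¹⁻¹) ^ j := conj_zpow.symm
    _ = (a ^ m) ^ j := by rw [inv_inv, h]
    _ = a ^ (m * j) := by rw [zpow_mul]

lemma key2 (s : ℤ) (hl : l = m * s) : ∀ (n : ℕ) (j : ℤ),
    ((gb l m k) ^ n)⁻¹ * (ga l m k) ^ (m * s ^ n * j) * (gb l m k) ^ n = (ga l m k) ^ (m * j) := by
  intro n
  induction n with
  | zero => intro j; simp
  | succ n ih =>
    intro j
    set a := ga l m k with ha
    set b := gb l m k with hb
    calc (b ^ (n+1))⁻¹ * a ^ (m * s ^ (n+1) * j) * b ^ (n+1)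
        = b⁻¹ * ((b ^ n)⁻¹ * a ^ (m * s ^ n * (s * j)) * b ^ n) * b := by
          rw [show m * s ^ (n+1) * j = m * s ^ n * (s * j) by ring, pow_succ]; group
      _ = b⁻¹ * a ^ (m * (s * j)) * b := by rw [ih]
      _ = b⁻¹ * a ^ (l * j) * b := by rw [show m * (s * j) = l * j by rw [hl]; ring]
      _ = a ^ (m * j) := key1 l m k j

end

lemma exists_surj (l m s k k' c r : ℤ) (p N : ℕ)
    (hl : l = m * s) (hc : k' = m * c) (hr : r * k = s ^ (p : ℕ) * k')
    (hrN : r ∣ s ^ (N : ℕ)) (hcop : IsCoprime r m) :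
    ∃ φ : GG l m k →* GG l m k', Function.Surjective φ := by
  set a := ga l m k' with hadef
  set t := gt' l m k' with htdef
  set b := gb l m k' with hbdef
  set f : Bool → GG l m k' := fun i => if i then a ^ r else b ^ p * t with hf
  have keyB : (b ^ p * t)⁻¹ * (a ^ r) ^ k * (b ^ p * t) = b := by
    calc (b ^ p * t)⁻¹ * (a ^ r) ^ k * (b ^ p * t)
        = t⁻¹ * ((b ^ p)⁻¹ * a ^ (m * s ^ p * c) * b ^ p) * t := by
          rw [← zpow_mul, show r * k = m * s ^ p * c by rw [hr, hc]; ring]; group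
      _ = t⁻¹ * a ^ (m * c) * t := by rw [key2 l m k' s hl p c]
      _ = b := by rw [← hc, hbdef, gb]
  have hmain : ∀ rr ∈ ({Grel l m k} : Set (FreeGroup Bool)), FreeGroup.lift f rr = 1 := by
    intro rr hrr
    rw [Set.mem_singleton_iff] at hrr
    subst hrr
    simp only [Grel, map_mul, map_inv, map_zpow, FreeGroup.lift_apply_of, hf, if_true, if_false,
      Bool.cond_true, Bool.cond_false]
    set T := b ^ p * t with hT
    set A := a ^ r with hA
    have hBneg : T⁻¹ * A ^ (-k) * T = b⁻¹ := by
      rw [zpow_neg, show T⁻¹ * (A ^ k)⁻¹ * T = (T⁻¹ * A ^ k * T)⁻¹ by group, keyB]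
    calc T⁻¹ * A ^ (-k) * T * A ^ l * T⁻¹ * A ^ k * T * A ^ (-m)
        = (T⁻¹ * A ^ (-k) * T) * A ^ l * (T⁻¹ * A ^ k * T) * A ^ (-m) := by group
      _ = b⁻¹ * A ^ l * b * A ^ (-m) := by rw [hBneg, keyB]
      _ = (b⁻¹ * a ^ (l * r) * b) * a ^ (-(m * r)) := by
          rw [hA, ← zpow_mul, ← zpow_mul, show r * l = l * r from mul_comm r l,
            show r * -m = -(m * r) by ring]
      _ = a ^ (m * r) * a ^ (-(m * r)) := by rw [key1 l m k' r]
      _ = 1 := by rw [← zpow_add]; simp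
  refine ⟨PresentedGroup.toGroup hmain, ?_⟩
  set φ := PresentedGroup.toGroup hmain with hφ
  have h1 : a ^ r ∈ φ.range := ⟨PresentedGroup.of true, by simp [hφ, hf]⟩
  have h2 : b ^ p * t ∈ φ.range := ⟨PresentedGroup.of false, by simp [hφ, hf]⟩
  have hb2 : b ∈ φ.range := by
    rw [← keyB]
    exact mul_mem (mul_mem (inv_mem h2) (zpow_mem h1 k)) h2
  have ht : t ∈ φ.range := by
    have := mul_mem (inv_mem (pow_mem hb2 p)) h2
    simpa [inv_mul_cancel_left] using this
  have ham : a ^ m ∈ φ.range := by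
    obtain ⟨d, hd⟩ := hrN
    have hmem : a ^ (m * s ^ (N:ℕ)) ∈ φ.range := by
      rw [show m * s ^ (N:ℕ) = r * (m * d) by rw [hd]; ring, zpow_mul]
      exact zpow_mem h1 _
    have e := key2 l m k' s hl N 1
    rw [mul_one, mul_one] at e
    rw [← e]
    exact mul_mem (mul_mem (inv_mem (pow_mem hb2 N)) hmem) (pow_mem hb2 N)
  have ha : a ∈ φ.range := by
    obtain ⟨u, v, huv⟩ := hcop
    have : a = (a ^ r) ^ u * (a ^ m) ^ v := by
      rw [← zpow_mul, ← zpow_mul, ← zpow_add, show r * u + m * v = 1 by linarith, zpow_one]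
    rw [this]
    exact mul_mem (zpow_mem h1 u) (zpow_mem ham v)
  intro y
  have : y ∈ φ.range := by
    refine PresentedGroup.generated_by _ φ.range (fun j => ?_) y
    cases j with
    | false => exact ht
    | true => exact ha
  exact this

theorem stmt_12 (l m s k₁ k₂ x y : ℤ) (hl : l = m * s)
    (h1 : |l| > m) (h2 : m > 1) (hcop : Int.gcd m s = 1)
    (hk₁ : m ∣ k₁) (hk₂ : m ∣ k₂)
    (hx : x ≠ 0) (hy : y ≠ 0) (hxs : IsSNumber s x) (hys : IsSNumber s y)
    (he : x * k₁ = y * k₂) :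
    (∃ φ : GG l m k₁ →* GG l m k₂, Function.Surjective φ) ∧
    (∃ ψ : GG l m k₂ →* GG l m k₁, Function.Surjective ψ) := by
  have hcm : IsCoprime s m := (Int.isCoprime_iff_gcd_eq_one.mpr hcop).symm
  obtain ⟨c₁, hc₁⟩ := hk₁
  obtain ⟨c₂, hc₂⟩ := hk₂
  obtain ⟨p, hp⟩ := sNumber_dvd_pow s y hy hys
  obtain ⟨q, hq⟩ := sNumber_dvd_pow s x hx hxs
  obtain ⟨d, hd⟩ := hp
  obtain ⟨d', hd'⟩ := hq
  constructor
  · refine exists_surj l m s k₁ k₂ c₂ (x * d) p (q + p) hl hc₂ ?_ ?_ ?_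
    · calc x * d * k₁ = d * (x * k₁) := by ring
        _ = d * (y * k₂) := by rw [he]
        _ = s ^ p * k₂ := by rw [hd]; ring
    · rw [pow_add]
      exact mul_dvd_mul ⟨d', hd'⟩ ⟨y, by rw [hd]; ring⟩
    · exact (hcm.pow_left (m := q + p)).of_isCoprime_of_dvd_left
        (by rw [pow_add]; exact mul_dvd_mul ⟨d', hd'⟩ ⟨y, by rw [hd]; ring⟩)
  · refine exists_surj l m s k₂ k₁ c₁ (y * d') q (p + q) hl hc₁ ?_ ?_ ?_
    · calc y * d' * k₂ = d' * (y * k₂) := by ring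
        _ = d' * (x * k₁) := by rw [he]
        _ = s ^ q * k₁ := by rw [hd']; ring
    · rw [pow_add]
      exact mul_dvd_mul ⟨d, hd⟩ ⟨x, by rw [hd']; ring⟩
    · exact (hcm.pow_left (m := p + q)).of_isCoprime_of_dvd_left
        (by rw [pow_add]; exact mul_dvd_mul ⟨d, hd⟩ ⟨x, by rw [hd']; ring⟩)
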